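/- Let Γ be a simple graph in which every edge lies in a unique triangle, and let Γ̃ be the graph obtained by subdividing: for each triangle of Γ add a new barycenter vertex joined to the three vertices of the triangle, and delete the original edges. Then any cycle in Γ̃ with all vertices distinct has at least 8 vertices. -/

import Mathlib

/-- A triangle of a simple graph: a 3-element vertex set, pairwise adjacent. -/
def IsTriangle {V : Type*} (Γ : SimpleGraph V) (t : Finset V) : Prop :=
  t.card = 3 ∧ ∀ u ∈ t, ∀ v ∈ t, u ≠ v → Γ.Adj u v

/-- The subdivided graph `Γ̃`: for each triangle of `Γ` add a new barycenter vertex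
joined to the three vertices of the triangle, and delete the original edges. -/
def Subdiv {V : Type*} (Γ : SimpleGraph V) :
    SimpleGraph (V ⊕ {t : Finset V // IsTriangle Γ t}) where
  Adj x y :=
    (∃ v t, x = Sum.inl v ∧ y = Sum.inr t ∧ v ∈ t.1) ∨
    (∃ v t, x = Sum.inr t ∧ y = Sum.inl v ∧ v ∈ t.1)
  symm := by
    constructor
    rintro x y (⟨v, t, rfl, rfl, h⟩ | ⟨v, t, rfl, rfl, h⟩)
    · exact Or.inr ⟨v, t, rfl, rfl, h⟩
    · exact Or.inl ⟨v, t, rfl, rfl, h⟩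
  loopless := by
    constructor
    rintro x (⟨v, t, rfl, h, _⟩ | ⟨v, t, rfl, h, _⟩) <;> simp at h

section Aux

variable {V : Type*} {Γ : SimpleGraph V}

lemma adj_inl {v : V} {y} (h : (Subdiv Γ).Adj (Sum.inl v) y) :
    ∃ t, y = Sum.inr t ∧ v ∈ t.1 := by
  rcases h with ⟨w, t, hx, hy, hm⟩ | ⟨w, t, hx, hy, hm⟩
  · cases hx; exact ⟨t, hy, hm⟩
  · simp at hx

lemma adj_inr {t : {t : Finset V // IsTriangle Γ t}} {y}
    (h : (Subdiv Γ).Adj (Sum.inr t) y) : ∃ v, y = Sum.inl v ∧ v ∈ t.1 := by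
  rcases h with ⟨w, s, hx, hy, hm⟩ | ⟨w, s, hx, hy, hm⟩
  · simp at hx
  · cases hx; exact ⟨w, hy, hm⟩

lemma tri_adj {t : {t : Finset V // IsTriangle Γ t}} {u v : V}
    (hu : u ∈ t.1) (hv : v ∈ t.1) (h : u ≠ v) : Γ.Adj u v :=
  t.2.2 u hu v hv h

lemma subdiv_parity {a b} (p : (Subdiv Γ).Walk a b) :
    Even p.length ↔ (a.isLeft = b.isLeft) := by
  induction p with
  | nil => simp
  | @cons a a' b h p ih =>
    rw [SimpleGraph.Walk.length_cons]
    rcases h with ⟨v, t, rfl, rfl, _⟩ | ⟨v, t, rfl, rfl, _⟩ <;>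
      cases b <;> simp [Nat.even_add_one, ih]

lemma no4 (x : V ⊕ {t : Finset V // IsTriangle Γ t})
    (htri : ∀ u v, Γ.Adj u v →
      ∃! t : {t : Finset V // IsTriangle Γ t}, u ∈ t.1 ∧ v ∈ t.1)
    (c : (Subdiv Γ).Walk x x) (hc : c.IsCycle) : c.length ≠ 4 := by
  intro hl
  cases c with
  | nil => simp at hl
  | cons h1 c => cases c with
    | nil => simp at hl
    | cons h2 c => cases c with
      | nil => simp at hl
      | cons h3 c => cases c with
        | nil => simp at hl
        | cons h4 c => cases c with
          | cons h5 c => simp [SimpleGraph.Walk.length_cons] at hl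
          | nil =>
            clear hl
            have hnd := hc.2
            simp [SimpleGraph.Walk.support, List.nodup_cons] at hnd
            rcases x with v | t
            · obtain ⟨t, rfl, hm1⟩ := adj_inl h1
              obtain ⟨w, rfl, hm2⟩ := adj_inr h2
              obtain ⟨s, rfl, hm3⟩ := adj_inl h3
              obtain ⟨u, heq, hm4⟩ := adj_inr h4
              have he : v = u := Sum.inl.inj heq
              subst he
              have hvw : v ≠ w := by
                rintro rfl; simp at hnd
              have hts : t ≠ s := by
                rintro rfl; simp at hnd
              obtain ⟨t0, -, huniq⟩ := htri v w (tri_adj hm1 hm2 hvw)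
              exact hts ((huniq t ⟨hm1, hm2⟩).trans (huniq s ⟨hm4, hm3⟩).symm)
            · obtain ⟨v, rfl, hm1⟩ := adj_inr h1
              obtain ⟨s, rfl, hm2⟩ := adj_inl h2
              obtain ⟨w, rfl, hm3⟩ := adj_inr h3
              obtain ⟨t', heq, hm4⟩ := adj_inl h4
              have he : t = t' := Sum.inr.inj heq
              subst he
              have hvw : v ≠ w := by
                rintro rfl; simp at hnd
              have hts : t ≠ s := by
                rintro rfl; simp at hnd
              obtain ⟨t0, -, huniq⟩ := htri v w (tri_adj hm1 hm4 hvw)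
              exact hts ((huniq t ⟨hm1, hm4⟩).trans (huniq s ⟨hm2, hm3⟩).symm)

lemma no6 (x : V ⊕ {t : Finset V // IsTriangle Γ t})
    (htri : ∀ u v, Γ.Adj u v →
      ∃! t : {t : Finset V // IsTriangle Γ t}, u ∈ t.1 ∧ v ∈ t.1)
    (c : (Subdiv Γ).Walk x x) (hc : c.IsCycle) : c.length ≠ 6 := by
  classical
  intro hl
  cases c with
  | nil => simp at hl
  | cons h1 c => cases c with
    | nil => simp at hl
    | cons h2 c => cases c with
      | nil => simp at hl
      | cons h3 c => cases c with
        | nil => simp at hl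
        | cons h4 c => cases c with
          | nil => simp at hl
          | cons h5 c => cases c with
            | nil => simp at hl
            | cons h6 c => cases c with
              | cons h7 c => simp [SimpleGraph.Walk.length_cons] at hl
              | nil =>
                clear hl
                have hnd := hc.2
                simp [SimpleGraph.Walk.support, List.nodup_cons] at hnd
                -- generic core: given v w u in triangles t s r pairwise
                have core : ∀ (t s r : {t : Finset V // IsTriangle Γ t}) (v w u : V),
                    v ∈ t.1 → w ∈ t.1 → w ∈ s.1 → u ∈ s.1 → u ∈ r.1 → v ∈ r.1 →
                    v ≠ w → w ≠ u → v ≠ u → t ≠ s → False := by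
                  intro t s r v w u h1 h2 h3 h4 h5 h6 hvw hwu hvu hts
                  have avw : Γ.Adj v w := tri_adj h1 h2 hvw
                  have awu : Γ.Adj w u := tri_adj h3 h4 hwu
                  have auv : Γ.Adj u v := tri_adj h5 h6 hvu.symm
                  have hT : IsTriangle Γ {v, w, u} := by
                    constructor
                    · exact Finset.card_eq_three.mpr ⟨v, w, u, hvw, hvu, hwu, rfl⟩
                    · intro a ha b hb hab
                      simp only [Finset.mem_insert, Finset.mem_singleton] at ha hb
                      rcases ha with rfl | rfl | rfl <;> rcases hb with rfl | rfl | rfl <;>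
                        first
                          | exact absurd rfl hab
                          | exact avw | exact avw.symm
                          | exact awu | exact awu.symm
                          | exact auv | exact auv.symm
                  set T : {t : Finset V // IsTriangle Γ t} := ⟨{v, w, u}, hT⟩ with hTdef
                  obtain ⟨t0, -, huniq1⟩ := htri v w avw
                  obtain ⟨s0, -, huniq2⟩ := htri w u awu
                  have ht : t = t0 := huniq1 t ⟨h1, h2⟩
                  have hTt : T = t0 := huniq1 T ⟨by simp [hTdef], by simp [hTdef]⟩
                  have hs : s = s0 := huniq2 s ⟨h3, h4⟩
                  have hTs : T = s0 := huniq2 T ⟨by simp [hTdef], by simp [hTdef]⟩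
                  exact hts (by rw [ht, hs, ← hTt, ← hTs])
                rcases x with v | t
                · obtain ⟨t, rfl, hm1⟩ := adj_inl h1
                  obtain ⟨w, rfl, hm2⟩ := adj_inr h2
                  obtain ⟨s, rfl, hm3⟩ := adj_inl h3
                  obtain ⟨u, rfl, hm4⟩ := adj_inr h4
                  obtain ⟨r, rfl, hm5⟩ := adj_inl h5
                  obtain ⟨v', heq, hm6⟩ := adj_inr h6
                  have he : v = v' := Sum.inl.inj heq
                  subst he
                  refine core t s r v w u hm1 hm2 hm3 hm4 hm5 hm6 ?_ ?_ ?_ ?_ <;>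
                    · rintro rfl; simp at hnd
                · obtain ⟨v, rfl, hm1⟩ := adj_inr h1
                  obtain ⟨s, rfl, hm2⟩ := adj_inl h2
                  obtain ⟨w, rfl, hm3⟩ := adj_inr h3
                  obtain ⟨r, rfl, hm4⟩ := adj_inl h4
                  obtain ⟨u, rfl, hm5⟩ := adj_inr h5
                  obtain ⟨t', heq, hm6⟩ := adj_inl h6
                  have he : t = t' := Sum.inr.inj heq
                  subst he
                  refine core s r t v w u hm2 hm3 hm4 hm5 hm6 hm1 ?_ ?_ ?_ ?_ <;>
                    · rintro rfl; simp at hnd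

end Aux

/-- If every edge of `Γ` lies in a unique triangle, then every cycle of the subdivided
graph `Γ̃` has at least 8 vertices (equivalently, length at least 8). -/
theorem stmt4 {V : Type*} (Γ : SimpleGraph V)
    (htri : ∀ u v, Γ.Adj u v →
      ∃! t : {t : Finset V // IsTriangle Γ t}, u ∈ t.1 ∧ v ∈ t.1)
    (x : V ⊕ {t : Finset V // IsTriangle Γ t}) (c : (Subdiv Γ).Walk x x)
    (hc : c.IsCycle) : 8 ≤ c.length := by
  have h3 := hc.three_le_length
  obtain ⟨k, hk⟩ : Even c.length := (subdiv_parity c).mpr rfl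
  have h4 := no4 x htri c hc
  have h6 := no6 x htri c hc
  omega
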